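/- For all positive integers n, r, a and all p ∈ [0,1], the probability that the bipartite graph H_f of a random Boolean function f with parameter p (|X| = |Y| = n) simultaneously has no cross-free matching of size a (i.e., ν×(H_f) < a) and has a matching of size at least r (i.e., ν(H_f) ≥ r), is at most the probability that the Erdős–Rényi random graph G_{r,p²} on r vertices with edge probability p² has no independent set of size a (i.e., α(G_{r,p²}) < a). -/

import Mathlib

open MeasureTheory Filter
open scoped Classical ENNReal NNReal

/-- Bernoulli measure on `Bool` with parameter `p` (clamped to `[0,1]`). -/
noncomputable def bern (p : ℝ) : Measure Bool :=
  (PMF.bernoulli (min (Real.toNNReal p) 1) (min_le_right _ _)).toMeasure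

instance bern.isProbabilityMeasure (p : ℝ) : IsProbabilityMeasure (bern p) := by
  unfold bern; infer_instance

/-- The law of a random Boolean function `f : [n] × [n] → Bool` with i.i.d.
Bernoulli(p) entries. -/
noncomputable def rbf (n : ℕ) (p : ℝ) : Measure ((Fin n × Fin n) → Bool) :=
  Measure.pi fun _ => bern p

/-- Erdős–Rényi random graph on `m` vertices, encoded by edge indicators on
ordered pairs `i < j`. -/
noncomputable def erg (m : ℕ) (q : ℝ) :
    Measure ({e : Fin m × Fin m // e.1 < e.2} → Bool) :=
  Measure.pi fun _ => bern q

def IsOneRect {n : ℕ} (f : (Fin n × Fin n) → Bool) (A B : Finset (Fin n)) : Prop :=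
  ∀ x ∈ A, ∀ y ∈ B, f (x, y) = true

/-- Size of the largest 1-rectangle of `f`. -/
noncomputable def onerec {n : ℕ} (f : (Fin n × Fin n) → Bool) : ℕ :=
  sSup {s | ∃ A B : Finset (Fin n), IsOneRect f A B ∧ s = A.card * B.card}

/-- Size of the 1-rectangle of `f` generated by the row set `K`. -/
noncomputable def rowGenSize {n : ℕ} (f : (Fin n × Fin n) → Bool) (K : Finset (Fin n)) : ℕ :=
  K.card * (Finset.univ.filter (fun y => ∀ x ∈ K, f (x, y) = true)).card

/-- Size of the 1-rectangle of `f` generated by the column set `L`. -/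
noncomputable def colGenSize {n : ℕ} (f : (Fin n × Fin n) → Bool) (L : Finset (Fin n)) : ℕ :=
  (Finset.univ.filter (fun x => ∀ y ∈ L, f (x, y) = true)).card * L.card

def IsFoolingSet {n : ℕ} (f : (Fin n × Fin n) → Bool) (F : Finset (Fin n × Fin n)) : Prop :=
  (∀ e ∈ F, f e = true) ∧
  ∀ e ∈ F, ∀ e' ∈ F, e ≠ e' → f (e.1, e'.2) = false ∨ f (e'.1, e.2) = false

/-- Maximum size of a fooling set of `f`. -/
noncomputable def fool {n : ℕ} (f : (Fin n × Fin n) → Bool) : ℕ :=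
  sSup {k | ∃ F : Finset (Fin n × Fin n), IsFoolingSet f F ∧ F.card = k}

/-- `F` is a matching in the bipartite graph `H_f`. -/
def IsMatchingIn {n : ℕ} (f : (Fin n × Fin n) → Bool) (F : Finset (Fin n × Fin n)) : Prop :=
  (∀ e ∈ F, f e = true) ∧
  ∀ e ∈ F, ∀ e' ∈ F, e ≠ e' → e.1 ≠ e'.1 ∧ e.2 ≠ e'.2

/-- Maximum size `ν(H_f)` of a matching in the bipartite graph `H_f`. -/
noncomputable def matchNum {n : ℕ} (f : (Fin n × Fin n) → Bool) : ℕ :=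
  sSup {k | ∃ F : Finset (Fin n × Fin n), IsMatchingIn f F ∧ F.card = k}

/-- Maximum size `ν×(H_f)` of a cross-free matching in `H_f`. -/
noncomputable def crossFreeMatchNum {n : ℕ} (f : (Fin n × Fin n) → Bool) : ℕ :=
  sSup {k | ∃ F : Finset (Fin n × Fin n),
    (IsMatchingIn f F ∧
      ∀ e ∈ F, ∀ e' ∈ F, e ≠ e' → f (e.1, e'.2) = false ∨ f (e'.1, e.2) = false) ∧
    F.card = k}

/-- `R` is a (1-)cover of `f` by 1-rectangles. -/
def IsCover {n : ℕ} (f : (Fin n × Fin n) → Bool)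
    (R : Finset (Finset (Fin n) × Finset (Fin n))) : Prop :=
  (∀ r ∈ R, IsOneRect f r.1 r.2) ∧
  ∀ x y : Fin n, f (x, y) = true → ∃ r ∈ R, x ∈ r.1 ∧ y ∈ r.2

/-- The cover number `rc(f)`. -/
noncomputable def coverNum {n : ℕ} (f : (Fin n × Fin n) → Bool) : ℕ :=
  sInf {k | ∃ R, IsCover f R ∧ R.card = k}

/-- The fractional cover number `frc(f)`: the infimum over probability
distributions `w` on 1-rectangles of the maximum over 1-entries `e` of the
reciprocal of the probability that a random rectangle covers `e`. -/
noncomputable def frc {n : ℕ} (f : (Fin n × Fin n) → Bool) : ℝ≥0∞ :=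
  ⨅ (w : (Finset (Fin n) × Finset (Fin n)) → ℝ≥0) (_ : ∑ r, w r = 1)
    (_ : ∀ r, w r ≠ 0 → IsOneRect f r.1 r.2),
    ⨆ (e : Fin n × Fin n) (_ : f e = true),
      ((∑ r ∈ Finset.univ.filter (fun r : Finset (Fin n) × Finset (Fin n) =>
          e.1 ∈ r.1 ∧ e.2 ∈ r.2), w r : ℝ≥0) : ℝ≥0∞)⁻¹

def IsIndepSet {m : ℕ} (g : {e : Fin m × Fin m // e.1 < e.2} → Bool)
    (A : Finset (Fin m)) : Prop :=
  ∀ i ∈ A, ∀ j ∈ A, ∀ h : i < j, g ⟨(i, j), h⟩ = false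

/-- The independence number `α` of a graph given by edge indicators. -/
noncomputable def indepNum {m : ℕ} (g : {e : Fin m × Fin m // e.1 < e.2} → Bool) : ℕ :=
  sSup {k | ∃ A : Finset (Fin m), IsIndepSet g A ∧ A.card = k}

/-- The number of distinct rows of `f` viewed as a matrix. -/
noncomputable def numDistinctRows {n : ℕ} (f : (Fin n × Fin n) → Bool) : ℕ :=
  (Finset.univ.image fun x : Fin n => fun y : Fin n => f (x, y)).card

/-- The number of distinct non-zero rows of `f` viewed as a matrix. -/
noncomputable def numDistinctNonzeroRows {n : ℕ} (f : (Fin n × Fin n) → Bool) : ℕ :=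
  ((Finset.univ.image fun x : Fin n => fun y : Fin n => f (x, y)).filter
    fun r => ∃ y, r y = true).card

/-- Number of ones in row `x`. -/
noncomputable def rowOnes {n : ℕ} (f : (Fin n × Fin n) → Bool) (x : Fin n) : ℕ :=
  (Finset.univ.filter fun y => f (x, y) = true).card

/-- Number of ones in column `y`. -/
noncomputable def colOnes {n : ℕ} (f : (Fin n × Fin n) → Bool) (y : Fin n) : ℕ :=
  (Finset.univ.filter fun x => f (x, y) = true).card

/-- `argmax_{b ∈ {⌊log_{1/p} e⌋, ⌈log_{1/p} e⌉}} b·pᵇ`. -/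
noncomputable def optA (p : ℝ) : ℕ :=
  if (⌈1 / Real.log (1 / p)⌉₊ : ℝ) * p ^ (⌈1 / Real.log (1 / p)⌉₊ : ℕ) ≤
      (⌊1 / Real.log (1 / p)⌋₊ : ℝ) * p ^ (⌊1 / Real.log (1 / p)⌋₊ : ℕ)
  then ⌊1 / Real.log (1 / p)⌋₊ else ⌈1 / Real.log (1 / p)⌉₊


namespace S19
variable {ι : Type*} [DecidableEq ι] [Fintype ι]
noncomputable def W (wt : Bool → ℝ) (f : ι → Bool) : ℝ := ∏ i, wt (f i)
noncomputable def Ex (wt : Bool → ℝ) (F : (ι → Bool) → ℝ) : ℝ :=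
  ∑ f : ι → Bool, W wt f * F f

lemma wt_nonneg {wt : Bool → ℝ} (h0 : 0 ≤ wt true) (h1 : 0 ≤ wt false) (b : Bool) : 0 ≤ wt b := by
  cases b <;> assumption
lemma W_nonneg {wt : Bool → ℝ} (h0 : 0 ≤ wt true) (h1 : 0 ≤ wt false) (f : ι → Bool) :
    0 ≤ W wt f :=
  Finset.prod_nonneg fun _ _ => wt_nonneg h0 h1 _
lemma Ex_mono {wt : Bool → ℝ} (h0 : 0 ≤ wt true) (h1 : 0 ≤ wt false)
    {F G : (ι → Bool) → ℝ} (h : ∀ f, F f ≤ G f) : Ex wt F ≤ Ex wt G :=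
  Finset.sum_le_sum fun f _ => mul_le_mul_of_nonneg_left (h f) (W_nonneg h0 h1 f)

lemma cube_sum_cons {m : ℕ} (H : (Fin (m+1) → Bool) → ℝ) :
    ∑ f : Fin (m+1) → Bool, H f
      = ∑ b : Bool, ∑ g : Fin m → Bool, H (Fin.cons b g) := by
  rw [← Equiv.sum_comp (Fin.consEquiv (fun _ => Bool)) H, Fintype.sum_prod_type]
  rfl

lemma W_cons {m : ℕ} (wt : Bool → ℝ) (b : Bool) (g : Fin m → Bool) :
    W wt (Fin.cons b g) = wt b * W wt g := by
  unfold W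
  rw [Fin.prod_univ_succ]
  simp

lemma Ex_cons {m : ℕ} (wt : Bool → ℝ) (H : (Fin (m+1) → Bool) → ℝ) :
    Ex wt H = ∑ b : Bool, wt b * Ex wt (fun g : Fin m → Bool => H (Fin.cons b g)) := by
  have h := cube_sum_cons (fun f => W wt f * H f)
  unfold Ex
  rw [h]
  refine Finset.sum_congr rfl fun b _ => ?_
  rw [Finset.mul_sum]
  exact Finset.sum_congr rfl fun g _ => by rw [W_cons]; ring

lemma cons_le_cons {m : ℕ} {b b' : Bool} {g g' : Fin m → Bool} (hb : b ≤ b') (hg : g ≤ g') :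
    (Fin.cons b g : Fin (m+1) → Bool) ≤ Fin.cons b' g' := by
  intro i
  refine Fin.cases ?_ ?_ i
  · simpa using hb
  · intro j; simpa using hg j

lemma harris_fin {m : ℕ} {wt : Bool → ℝ} (h0 : 0 ≤ wt true) (h1 : 0 ≤ wt false)
    (hsum : wt true + wt false = 1) :
    ∀ (F G : (Fin m → Bool) → ℝ), Monotone F → Monotone G →
      Ex wt F * Ex wt G ≤ Ex wt (fun f => F f * G f) := by
  induction m with
  | zero =>
    intro F G _ _
    have h : ∀ (H : (Fin 0 → Bool) → ℝ), Ex wt H = H (fun i => i.elim0) := by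
      intro H
      rw [Ex]
      rw [Finset.sum_congr rfl (fun f _ => by
        rw [Subsingleton.elim f (fun i : Fin 0 => i.elim0)] :
        ∀ f ∈ Finset.univ, W wt f * H f
          = W wt (fun i : Fin 0 => i.elim0) * H (fun i : Fin 0 => i.elim0))]
      rw [Finset.sum_const, Finset.card_univ]
      have hc : Fintype.card (Fin 0 → Bool) = 1 := by simp
      have hW : W wt (fun i : Fin 0 => i.elim0) = 1 := by simp [W]
      rw [hc, hW, one_mul, one_smul]
    rw [h, h, h]
  | succ m ih =>
    intro F G hF hG
    have hmono : ∀ (K : (Fin (m+1) → Bool) → ℝ) (b : Bool), Monotone K →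
        Monotone (fun g : Fin m → Bool => K (Fin.cons b g)) :=
      fun K b hK _ _ hgg => hK (cons_le_cons le_rfl hgg)
    rw [Ex_cons wt F, Ex_cons wt G, Ex_cons wt (fun f => F f * G f), Fintype.sum_bool,
      Fintype.sum_bool, Fintype.sum_bool]
    have k1 := ih _ _ (hmono F true hF) (hmono G true hG)
    have k0 := ih _ _ (hmono F false hF) (hmono G false hG)
    have hA : Ex wt (fun g : Fin m → Bool => F (Fin.cons false g))
        ≤ Ex wt (fun g : Fin m → Bool => F (Fin.cons true g)) :=
      Ex_mono h0 h1 fun g => hF (cons_le_cons (by simp) le_rfl)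
    have hB : Ex wt (fun g : Fin m → Bool => G (Fin.cons false g))
        ≤ Ex wt (fun g : Fin m → Bool => G (Fin.cons true g)) :=
      Ex_mono h0 h1 fun g => hG (cons_le_cons (by simp) le_rfl)
    set t := wt true with ht
    have hf : wt false = 1 - t := by linarith
    set A1 := Ex wt (fun g : Fin m → Bool => F (Fin.cons true g))
    set A0 := Ex wt (fun g : Fin m → Bool => F (Fin.cons false g))
    set B1 := Ex wt (fun g : Fin m → Bool => G (Fin.cons true g))
    set B0 := Ex wt (fun g : Fin m → Bool => G (Fin.cons false g))
    set E1 := Ex wt (fun g : Fin m → Bool => F (Fin.cons true g) * G (Fin.cons true g))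
    set E0 := Ex wt (fun g : Fin m → Bool => F (Fin.cons false g) * G (Fin.cons false g))
    rw [hf]
    have h1' : (0:ℝ) ≤ 1 - t := by rw [← hf]; exact h1
    have step2 : (t*A1 + (1-t)*A0) * (t*B1 + (1-t)*B0) ≤ t*(A1*B1) + (1-t)*(A0*B0) := by
      nlinarith [mul_nonneg (mul_nonneg h0 h1') (mul_nonneg (sub_nonneg.2 hA) (sub_nonneg.2 hB))]
    have s1 : t * (A1*B1) ≤ t * E1 := mul_le_mul_of_nonneg_left k1 h0
    have s0 : (1-t) * (A0*B0) ≤ (1-t) * E0 := mul_le_mul_of_nonneg_left k0 h1'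
    linarith
lemma Ex_reindex {m : ℕ} (e : ι ≃ Fin m) (wt : Bool → ℝ) (H : (ι → Bool) → ℝ) :
    Ex wt H = Ex wt (fun g : Fin m → Bool => H (g ∘ e)) := by
  unfold Ex
  rw [← Equiv.sum_comp (Equiv.arrowCongr e.symm (Equiv.refl Bool))
    (fun f : ι → Bool => W wt f * H f)]
  refine Finset.sum_congr rfl fun g _ => ?_
  have h1 : (Equiv.arrowCongr e.symm (Equiv.refl Bool)) g = g ∘ e := by
    funext i; simp [Equiv.arrowCongr]
  rw [h1]
  congr 1
  unfold W
  exact Equiv.prod_comp e fun j => wt (g j)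

lemma harris {wt : Bool → ℝ} (h0 : 0 ≤ wt true) (h1 : 0 ≤ wt false)
    (hsum : wt true + wt false = 1) {F G : (ι → Bool) → ℝ}
    (hF : Monotone F) (hG : Monotone G) :
    Ex wt F * Ex wt G ≤ Ex wt (fun f => F f * G f) := by
  let e := Fintype.equivFin ι
  rw [Ex_reindex e wt F, Ex_reindex e wt G, Ex_reindex e wt (fun f => F f * G f)]
  exact harris_fin h0 h1 hsum _ _
    (fun g g' hgg => hF (fun i => hgg (e i))) (fun g g' hgg => hG (fun i => hgg (e i)))

lemma Ex_sub (wt : Bool → ℝ) (F G : (ι → Bool) → ℝ) :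
    Ex wt (fun f => F f - G f) = Ex wt F - Ex wt G := by
  simp [Ex, mul_sub, Finset.sum_sub_distrib]

lemma sum_W {wt : Bool → ℝ} (hsum : wt true + wt false = 1) :
    ∑ f : ι → Bool, W wt f = 1 := by
  unfold W
  rw [← Fintype.prod_sum (fun (_ : ι) (b : Bool) => wt b)]
  simp [Fintype.sum_bool, hsum]

lemma Ex_one {wt : Bool → ℝ} (hsum : wt true + wt false = 1) :
    Ex wt (fun _ : ι → Bool => (1:ℝ)) = 1 := by
  simp only [Ex, mul_one]
  exact sum_W hsum

lemma harris_anti {wt : Bool → ℝ} (h0 : 0 ≤ wt true) (h1 : 0 ≤ wt false)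
    (hsum : wt true + wt false = 1) {F G : (ι → Bool) → ℝ}
    (hF : Monotone F) (hG : Antitone G) :
    Ex wt (fun f => F f * G f) ≤ Ex wt F * Ex wt G := by
  have hG' : Monotone (fun f : ι → Bool => 1 - G f) := fun x y hxy => by
    simp only [sub_le_sub_iff_left]; exact hG hxy
  have h := harris h0 h1 hsum hF hG'
  have e1 : Ex wt (fun f : ι → Bool => 1 - G f)
      = 1 - Ex wt G := by
    rw [Ex_sub wt (fun _ => 1) G, Ex_one hsum]
  have e2 : Ex wt (fun f => F f * (1 - G f)) = Ex wt F - Ex wt (fun f => F f * G f) := by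
    rw [← Ex_sub wt F (fun f => F f * G f)]
    congr 1; funext f; ring
  rw [e1, e2] at h
  nlinarith [h]

lemma Ex_split {κ₁ κ₂ : Type*} [DecidableEq κ₁] [DecidableEq κ₂] [Fintype κ₁] [Fintype κ₂] (e : κ₁ ⊕ κ₂ ≃ ι)
    (wt : Bool → ℝ) (H : (ι → Bool) → ℝ) :
    Ex wt H = ∑ u : κ₁ → Bool, ∑ v : κ₂ → Bool,
      W wt u * W wt v * H (fun i => Sum.elim u v (e.symm i)) := by
  unfold Ex
  rw [← Equiv.sum_comp
    (((Equiv.sumArrowEquivProdArrow κ₁ κ₂ Bool).symm).trans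
      (Equiv.arrowCongr e (Equiv.refl Bool)))
    (fun f : ι → Bool => W wt f * H f), Fintype.sum_prod_type]
  refine Finset.sum_congr rfl fun u _ => Finset.sum_congr rfl fun v _ => ?_
  have h1 : (((Equiv.sumArrowEquivProdArrow κ₁ κ₂ Bool).symm).trans
      (Equiv.arrowCongr e (Equiv.refl Bool))) (u, v) = fun i => Sum.elim u v (e.symm i) := by
    funext i
    simp [Equiv.sumArrowEquivProdArrow, Equiv.arrowCongr]
  rw [h1]
  congr 1
  unfold W
  rw [Equiv.prod_comp e.symm (fun j => wt (Sum.elim u v j)), Fintype.prod_sum_type]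
  simp

noncomputable def indi {α : Type*} (P : α → Prop) : α → ℝ := fun x => if P x then 1 else 0

lemma indi_nonneg {α : Type*} (P : α → Prop) (x : α) : 0 ≤ indi P x := by
  unfold indi; split <;> norm_num

lemma indi_le_one {α : Type*} (P : α → Prop) (x : α) : indi P x ≤ 1 := by
  unfold indi; split <;> norm_num

lemma indi_and {α : Type*} (P Q : α → Prop) (x : α) :
    indi (fun y => P y ∧ Q y) x = indi P x * indi Q x := by
  unfold indi
  by_cases hP : P x <;> by_cases hQ : Q x <;> simp [hP, hQ]

/-- Merge: fix coordinates in the range of `cell` to `true`, use `v` elsewhere. -/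
noncomputable def mrg {κ : Type*} (cell : κ → ι) (v : {i : ι // i ∉ Set.range cell} → Bool) :
    ι → Bool :=
  fun i => if h : i ∈ Set.range cell then true else v ⟨i, h⟩

lemma mrg_mono {κ : Type*} (cell : κ → ι) : Monotone (mrg cell) := by
  intro v v' hv i
  unfold mrg
  split
  · exact le_rfl
  · exact hv _

lemma mrg_cell {κ : Type*} (cell : κ → ι) (v) (k : κ) : mrg cell v (cell k) = true := by
  unfold mrg
  rw [dif_pos ⟨k, rfl⟩]

lemma mrg_not_cell {κ : Type*} (cell : κ → ι) (v) (i : ι) (h : i ∉ Set.range cell) :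
    mrg cell v i = v ⟨i, h⟩ := by
  unfold mrg
  rw [dif_neg h]

lemma Ex_fix {κ : Type*} [DecidableEq κ] [Fintype κ] (wt : Bool → ℝ) (cell : κ → ι)
    (hinj : Function.Injective cell) (X : (ι → Bool) → Prop) :
    Ex wt (indi fun f => (∀ k, f (cell k) = true) ∧ X f)
      = wt true ^ (Fintype.card κ) *
        Ex wt (indi fun v : {i : ι // i ∉ Set.range cell} → Bool => X (mrg cell v)) := by
  classical
  set e : κ ⊕ {i : ι // i ∉ Set.range cell} ≃ ι :=
    (Equiv.sumCongr (Equiv.ofInjective cell hinj) (Equiv.refl _)).trans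
      (Equiv.sumCompl (· ∈ Set.range cell)) with he
  have he1 : ∀ k, e (Sum.inl k) = cell k := fun k => rfl
  have he2 : ∀ x, e (Sum.inr x) = x.1 := fun x => rfl
  rw [Ex_split e]
  have key : ∀ (u : κ → Bool) (v : {i : ι // i ∉ Set.range cell} → Bool),
      W wt u * W wt v * indi (fun f => (∀ k, f (cell k) = true) ∧ X f)
        (fun i => Sum.elim u v (e.symm i))
      = if u = (fun _ => true) then W wt u * (W wt v * indi (fun v' => X (mrg cell v')) v)
        else 0 := by
    intro u v
    have hvc : ∀ k, Sum.elim u v (e.symm (cell k)) = u k := by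
      intro k
      have hsymm : e.symm (cell k) = Sum.inl k := by
        rw [Equiv.symm_apply_eq]; exact (he1 k).symm
      rw [hsymm]
      rfl
    by_cases hu : u = (fun _ => true)
    · have hfm : (fun i => Sum.elim u v (e.symm i)) = mrg cell v := by
        funext i
        by_cases hi : i ∈ Set.range cell
        · obtain ⟨k, rfl⟩ := hi
          show Sum.elim u v (e.symm (cell k)) = mrg cell v (cell k)
          rw [hvc k, mrg_cell, hu]
        · have hsymm : e.symm i = Sum.inr ⟨i, hi⟩ := by
            rw [Equiv.symm_apply_eq]; exact (he2 ⟨i, hi⟩).symm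
          rw [mrg_not_cell cell v i hi]
          show Sum.elim u v (e.symm i) = v ⟨i, hi⟩
          rw [hsymm]
          rfl
      rw [if_pos hu, hfm]
      have : (∀ k, mrg cell v (cell k) = true) := fun k => mrg_cell cell v k
      unfold indi
      by_cases hX : X (mrg cell v)
      · rw [if_pos ⟨this, hX⟩, if_pos hX]; ring
      · rw [if_neg (fun hc => hX hc.2), if_neg hX]; ring
    · rw [if_neg hu]
      have : ¬ ((∀ k, (fun i => Sum.elim u v (e.symm i)) (cell k) = true) ∧
          X (fun i => Sum.elim u v (e.symm i))) := by
        rintro ⟨hall, -⟩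
        exact hu (funext fun k => by rw [← hvc k]; exact hall k)
      unfold indi
      rw [if_neg this, mul_zero]
  rw [Finset.sum_congr rfl fun u _ => Finset.sum_congr rfl fun v _ => key u v]
  rw [Finset.sum_comm]
  have inner : ∀ v : {i : ι // i ∉ Set.range cell} → Bool,
      (∑ u : κ → Bool, if u = (fun _ => true) then
          W wt u * (W wt v * indi (fun v' => X (mrg cell v')) v) else 0)
        = wt true ^ (Fintype.card κ) * (W wt v * indi (fun v' => X (mrg cell v')) v) := by
    intro v
    rw [Finset.sum_ite_eq' Finset.univ (fun _ => true)
      (fun u => W wt u * (W wt v * indi (fun v' => X (mrg cell v')) v))]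
    rw [if_pos (Finset.mem_univ _)]
    congr 1
    unfold W
    simp [Finset.prod_const]
  rw [Finset.sum_congr rfl fun v _ => inner v, ← Finset.mul_sum]
  unfold Ex
  rfl

noncomputable def wtq (q : ℝ) : Bool → ℝ := fun b => if b then q else 1 - q

@[simp] lemma wtq_true (q : ℝ) : wtq q true = q := rfl
@[simp] lemma wtq_false (q : ℝ) : wtq q false = 1 - q := rfl

lemma wtq_sum (q : ℝ) : wtq q true + wtq q false = 1 := by simp

lemma Ex_push {κ : Type*} [DecidableEq κ] [Fintype κ] (q : ℝ) (c₁ c₂ : κ → ι)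
    (hinj : Function.Injective (fun x : κ × Bool => cond x.2 (c₁ x.1) (c₂ x.1)))
    (F : (κ → Bool) → ℝ) :
    Ex (wtq q) (fun f => F (fun k => f (c₁ k) && f (c₂ k)))
      = Ex (wtq (q*q)) F := by
  classical
  set φ : κ × Bool → ι := fun x => cond x.2 (c₁ x.1) (c₂ x.1) with hφ
  set e : (κ × Bool) ⊕ {i : ι // i ∉ Set.range φ} ≃ ι :=
    (Equiv.sumCongr (Equiv.ofInjective φ hinj) (Equiv.refl _)).trans
      (Equiv.sumCompl (· ∈ Set.range φ)) with he
  rw [Ex_split e]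
  have hall : ∀ (u : κ × Bool → Bool) (v : {i : ι // i ∉ Set.range φ} → Bool),
      (fun k => (fun i => Sum.elim u v (e.symm i)) (c₁ k)
          && (fun i => Sum.elim u v (e.symm i)) (c₂ k))
        = fun k => u (k, true) && u (k, false) := by
    intro u v; funext k
    have h1 : e.symm (c₁ k) = Sum.inl (k, true) := by rw [Equiv.symm_apply_eq]; rfl
    have h2 : e.symm (c₂ k) = Sum.inl (k, false) := by rw [Equiv.symm_apply_eq]; rfl
    simp only [h1, h2, Sum.elim_inl]
  have step : ∀ u : κ × Bool → Bool,
      (∑ v : {i : ι // i ∉ Set.range φ} → Bool, W (wtq q) u * W (wtq q) v *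
        F (fun k => (fun i => Sum.elim u v (e.symm i)) (c₁ k)
            && (fun i => Sum.elim u v (e.symm i)) (c₂ k)))
        = W (wtq q) u * F (fun k => u (k, true) && u (k, false)) := by
    intro u
    have e1 : ∀ v : {i : ι // i ∉ Set.range φ} → Bool,
        W (wtq q) u * W (wtq q) v *
            F (fun k => (fun i => Sum.elim u v (e.symm i)) (c₁ k)
              && (fun i => Sum.elim u v (e.symm i)) (c₂ k))
          = W (wtq q) v * (W (wtq q) u * F (fun k => u (k, true) && u (k, false))) := by
      intro v; rw [hall u v]; ring
    rw [Finset.sum_congr rfl fun v _ => e1 v, ← Finset.sum_mul, sum_W (wtq_sum q), one_mul]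
  rw [Finset.sum_congr rfl fun u _ => step u]
  -- reindex over pairs
  set E4 : (κ → Bool × Bool) ≃ (κ × Bool → Bool) :=
    (Equiv.piCongrRight (fun _ : κ => (Equiv.boolArrowEquivProd Bool).symm)).trans
      (Equiv.curry κ Bool Bool).symm with hE4def
  have hE4 : ∀ (d : κ → Bool × Bool) (k : κ) (b : Bool),
      E4 d (k, b) = cond b (d k).2 (d k).1 := by
    intro d k b; cases b <;> rfl
  rw [← Equiv.sum_comp E4
    (fun u : κ × Bool → Bool => W (wtq q) u * F (fun k => u (k, true) && u (k, false)))]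
  have hW4 : ∀ d : κ → Bool × Bool,
      W (wtq q) (E4 d) = ∏ k, (wtq q (d k).2 * wtq q (d k).1) := by
    intro d
    rw [W, Fintype.prod_prod_type]
    exact Finset.prod_congr rfl fun k _ => by simp [Fintype.prod_bool, hE4]
  have hF4 : ∀ d : κ → Bool × Bool,
      (fun k => E4 d (k, true) && E4 d (k, false)) = fun k => (d k).2 && (d k).1 := by
    intro d; funext k; simp [hE4]
  rw [Finset.sum_congr rfl fun d _ => by rw [hW4 d, hF4 d]]
  -- expand F as a sum over g
  have hFd : ∀ d : κ → Bool × Bool,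
      F (fun k => (d k).2 && (d k).1)
        = ∑ g : κ → Bool, if g = (fun k => (d k).2 && (d k).1) then F g else 0 := by
    intro d
    rw [Finset.sum_ite_eq' Finset.univ (fun k => (d k).2 && (d k).1) F,
      if_pos (Finset.mem_univ _)]
  rw [Finset.sum_congr rfl fun d _ => by rw [hFd d, Finset.mul_sum]]
  rw [Finset.sum_comm]
  have inner : ∀ g : κ → Bool,
      (∑ d : κ → Bool × Bool, (∏ k, (wtq q (d k).2 * wtq q (d k).1)) *
          (if g = (fun k => (d k).2 && (d k).1) then F g else 0))
        = W (wtq (q*q)) g * F g := by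
    intro g
    have h1 : ∀ d : κ → Bool × Bool,
        (∏ k, (wtq q (d k).2 * wtq q (d k).1)) *
            (if g = (fun k => (d k).2 && (d k).1) then F g else 0)
          = F g * (∏ k, (if g k = ((d k).2 && (d k).1)
              then wtq q (d k).2 * wtq q (d k).1 else 0)) := by
      intro d
      by_cases h : g = fun k => (d k).2 && (d k).1
      · rw [if_pos h]
        rw [Finset.prod_congr rfl fun k _ =>
          (if_pos (congrFun h k) : (if g k = ((d k).2 && (d k).1)
            then wtq q (d k).2 * wtq q (d k).1 else 0) = _)]
        ring
      · rw [if_neg h]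
        obtain ⟨k, hk⟩ := Function.ne_iff.mp h
        have hz : (∏ k, (if g k = ((d k).2 && (d k).1)
            then wtq q (d k).2 * wtq q (d k).1 else 0)) = (0:ℝ) :=
          Finset.prod_eq_zero (Finset.mem_univ k) (if_neg hk)
        rw [hz]
        ring
    rw [Finset.sum_congr rfl fun d _ => h1 d, ← Finset.mul_sum]
    rw [← Fintype.prod_sum (fun k (pr : Bool × Bool) =>
      if g k = (pr.2 && pr.1) then wtq q pr.2 * wtq q pr.1 else 0)]
    have h2 : ∀ k, (∑ pr : Bool × Bool,
        if g k = (pr.2 && pr.1) then wtq q pr.2 * wtq q pr.1 else 0) = wtq (q*q) (g k) := by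
      intro k
      cases hg : g k <;>
        simp [Fintype.sum_prod_type, Fintype.sum_bool] <;> ring
    rw [Finset.prod_congr rfl fun k _ => h2 k]
    rw [W]; ring
  rw [Finset.sum_congr rfl fun g _ => inner g]
  rfl

section Comb
open Finset

lemma bool_true_le {b : Bool} (h : true ≤ b) : b = true := by
  cases b
  · exact absurd h (by decide)
  · rfl

lemma bool_le_false {b : Bool} (h : b ≤ false) : b = false := by
  cases b
  · rfl
  · exact absurd h (by decide)

/-- Candidate placements of `r` matching edges. -/
def Cand (n r : ℕ) : Type :=
  {q : (Fin r → Fin n) × (Fin r → Fin n) //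
    Function.Injective q.1 ∧ Function.Injective q.2}

noncomputable instance (n r : ℕ) : Fintype (Cand n r) := by
  unfold Cand; exact Subtype.fintype _

noncomputable instance (n r : ℕ) : LinearOrder (Cand n r) :=
  LinearOrder.lift' (Fintype.equivFin (Cand n r)) (Equiv.injective _)

def good {n r : ℕ} (f : (Fin n × Fin n) → Bool) (c : Cand n r) : Prop :=
  ∀ i, f (c.1.1 i, c.1.2 i) = true

/-- The cross pattern of a candidate. -/
def grc {n r : ℕ} (f : (Fin n × Fin n) → Bool) (c : Cand n r) :
    {e : Fin r × Fin r // e.1 < e.2} → Bool :=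
  fun e => f (c.1.1 e.1.1, c.1.2 e.1.2) && f (c.1.1 e.1.2, c.1.2 e.1.1)

def Mev {n r : ℕ} (f : (Fin n × Fin n) → Bool) (c : Cand n r) : Prop :=
  good f c ∧ ∀ c' < c, ¬ good f c'

lemma good_mono {n r : ℕ} {f f' : (Fin n × Fin n) → Bool} (h : f ≤ f') {c : Cand n r}
    (hg : good f c) : good f' c := by
  intro i
  have := h (c.1.1 i, c.1.2 i)
  rw [hg i] at this
  exact bool_true_le this

lemma bool_and_le {b b' c c' : Bool} (hb : b ≤ b') (hc : c ≤ c') : (b && c) ≤ (b' && c') := by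
  cases b <;> cases b' <;> cases c <;> cases c' <;> first | rfl | (exact absurd hb (by decide)) | (exact absurd hc (by decide)) | decide

lemma grc_mono {n r : ℕ} {f f' : (Fin n × Fin n) → Bool} (h : f ≤ f') (c : Cand n r) :
    grc f c ≤ grc f' c := by
  intro e
  unfold grc
  exact bool_and_le (h _) (h _)

lemma indepNum_anti {r : ℕ} {g g' : {e : Fin r × Fin r // e.1 < e.2} → Bool} (h : g ≤ g') :
    indepNum g' ≤ indepNum g := by
  unfold indepNum
  have hb : BddAbove {k | ∃ A : Finset (Fin r), IsIndepSet g A ∧ A.card = k} := by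
    refine ⟨(Finset.univ : Finset (Fin r)).card, ?_⟩
    rintro k ⟨A, -, rfl⟩
    exact Finset.card_le_univ A
  have hne : {k | ∃ A : Finset (Fin r), IsIndepSet g' A ∧ A.card = k}.Nonempty :=
    ⟨0, ∅, fun i hi => absurd hi (by simp), by simp⟩
  refine csSup_le_csSup hb hne ?_
  rintro k ⟨A, hA, rfl⟩
  refine ⟨A, fun i hi j hj hij => ?_, rfl⟩
  have h1 := h ⟨(i, j), hij⟩
  rw [hA i hi j hj hij] at h1
  exact bool_le_false h1

lemma exists_good {n r : ℕ} {f : (Fin n × Fin n) → Bool} (h : r ≤ matchNum f) :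
    ∃ c : Cand n r, good f c := by
  classical
  set S := {k | ∃ F : Finset (Fin n × Fin n), IsMatchingIn f F ∧ F.card = k} with hS
  have h0 : 0 ∈ S := ⟨∅, ⟨fun e he => absurd he (by simp),
    fun e he => absurd he (by simp)⟩, by simp⟩
  have hbdd : BddAbove S := ⟨(Finset.univ : Finset (Fin n × Fin n)).card, by
    rintro k ⟨F, -, rfl⟩; exact Finset.card_le_univ F⟩
  obtain ⟨F, hF, hcard⟩ := Nat.sSup_mem ⟨0, h0⟩ hbdd
  have hr : r ≤ F.card := by
    rw [hcard]
    exact h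
  obtain ⟨F', hsub, hcard'⟩ := Finset.exists_subset_card_eq hr
  have hF' : IsMatchingIn f F' :=
    ⟨fun e he => hF.1 e (hsub he),
     fun e he e' he' hne => hF.2 e (hsub he) e' (hsub he') hne⟩
  set E : Fin r ≃ F' := (Finset.equivFinOfCardEq hcard').symm with hE
  have hEinj : Function.Injective fun i => (E i : Fin n × Fin n) :=
    fun i j hij => E.injective (Subtype.ext hij)
  have hmem : ∀ i, (E i : Fin n × Fin n) ∈ F' := fun i => (E i).2
  refine ⟨⟨(fun i => (E i : Fin n × Fin n).1, fun i => (E i : Fin n × Fin n).2), ?_, ?_⟩, ?_⟩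
  · intro i j hij
    by_contra hne
    have hval : (E i : Fin n × Fin n) ≠ (E j : Fin n × Fin n) :=
      fun hv => hne (hEinj hv)
    exact (hF'.2 _ (hmem i) _ (hmem j) hval).1 hij
  · intro i j hij
    by_contra hne
    have hval : (E i : Fin n × Fin n) ≠ (E j : Fin n × Fin n) :=
      fun hv => hne (hEinj hv)
    exact (hF'.2 _ (hmem i) _ (hmem j) hval).2 hij
  · intro i
    have := hF'.1 _ (hmem i)
    simpa using this

lemma exists_min_good {n r : ℕ} {f : (Fin n × Fin n) → Bool}
    (h : ∃ c : Cand n r, good f c) : ∃ c : Cand n r, Mev f c := by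
  classical
  obtain ⟨c0, hc0⟩ := h
  set s : Finset (Cand n r) := Finset.univ.filter (fun c => good f c) with hs
  have hne : s.Nonempty := ⟨c0, by simp [hs, hc0]⟩
  refine ⟨s.min' hne, ?_, ?_⟩
  · have := s.min'_mem hne
    simp only [hs, Finset.mem_filter] at this
    exact this.2
  · intro c' hc' hg
    exact absurd (s.min'_le c' (by simp [hs, hg])) (not_le.mpr hc')

lemma Mev_unique {n r : ℕ} {f : (Fin n × Fin n) → Bool} {c c' : Cand n r}
    (h : Mev f c) (h' : Mev f c') : c = c' := by
  rcases lt_trichotomy c c' with hlt | heq | hlt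
  · exact absurd h.1 (h'.2 c hlt)
  · exact heq
  · exact absurd h'.1 (h.2 c' hlt)

lemma cross_of_good {n r a : ℕ} {f : (Fin n × Fin n) → Bool} {c : Cand n r}
    (hg : good f c) (hcf : crossFreeMatchNum f < a) : indepNum (grc f c) < a := by
  classical
  by_contra hle
  push_neg at hle
  set S := {k | ∃ A : Finset (Fin r), IsIndepSet (grc f c) A ∧ A.card = k} with hS
  have h0 : 0 ∈ S := ⟨∅, fun i hi => absurd hi (by simp), by simp⟩
  have hbdd : BddAbove S := ⟨(Finset.univ : Finset (Fin r)).card, by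
    rintro k ⟨A, -, rfl⟩; exact Finset.card_le_univ A⟩
  obtain ⟨A, hA, hAcard⟩ := Nat.sSup_mem ⟨0, h0⟩ hbdd
  have ha : a ≤ A.card := by rw [hAcard]; exact hle
  obtain ⟨A', hsub, hA'card⟩ := Finset.exists_subset_card_eq ha
  have hA' : IsIndepSet (grc f c) A' :=
    fun i hi j hj hij => hA i (hsub hi) j (hsub hj) hij
  have hinj2 : Function.Injective (fun i : Fin r => (c.1.1 i, c.1.2 i)) :=
    fun i j hij => c.2.1 (congrArg Prod.fst hij)
  set F : Finset (Fin n × Fin n) := A'.image (fun i => (c.1.1 i, c.1.2 i)) with hFdef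
  have hFcard : F.card = a := by
    rw [hFdef, Finset.card_image_of_injective _ hinj2, hA'card]
  have hkey : ∀ e ∈ F, ∃ i ∈ A', (c.1.1 i, c.1.2 i) = e := by
    intro e he
    simpa [hFdef] using Finset.mem_image.mp he
  have hcross : ∀ e ∈ F, ∀ e' ∈ F, e ≠ e' →
      f (e.1, e'.2) = false ∨ f (e'.1, e.2) = false := by
    intro e he e' he' hne
    obtain ⟨i, hiA, rfl⟩ := hkey e he
    obtain ⟨j, hjA, rfl⟩ := hkey e' he'
    have hij : i ≠ j := fun hij => hne (by rw [hij])
    rcases hij.lt_or_gt with hlt | hlt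
    · have := hA' i hiA j hjA hlt
      unfold grc at this
      simp only [Bool.and_eq_false_eq_eq_false_or_eq_false] at this
      exact this
    · have := hA' j hjA i hiA hlt
      unfold grc at this
      simp only [Bool.and_eq_false_eq_eq_false_or_eq_false] at this
      exact this.symm
  have hmatch : IsMatchingIn f F := by
    constructor
    · intro e he
      obtain ⟨i, hiA, rfl⟩ := hkey e he
      exact hg i
    · intro e he e' he' hne
      obtain ⟨i, hiA, rfl⟩ := hkey e he
      obtain ⟨j, hjA, rfl⟩ := hkey e' he'
      have hij : i ≠ j := fun hij => hne (by rw [hij])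
      exact ⟨fun hv => hij (c.2.1 hv), fun hv => hij (c.2.2 hv)⟩
  have hmem : a ∈ {k | ∃ F : Finset (Fin n × Fin n),
      (IsMatchingIn f F ∧
        ∀ e ∈ F, ∀ e' ∈ F, e ≠ e' → f (e.1, e'.2) = false ∨ f (e'.1, e.2) = false) ∧
      F.card = k} := ⟨F, ⟨hmatch, hcross⟩, hFcard⟩
  have hbdd2 : BddAbove {k | ∃ F : Finset (Fin n × Fin n),
      (IsMatchingIn f F ∧
        ∀ e ∈ F, ∀ e' ∈ F, e ≠ e' → f (e.1, e'.2) = false ∨ f (e'.1, e.2) = false) ∧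
      F.card = k} := ⟨(Finset.univ : Finset (Fin n × Fin n)).card, by
    rintro k ⟨F, -, rfl⟩; exact Finset.card_le_univ F⟩
  exact absurd (le_csSup hbdd2 hmem) (not_le.mpr hcf)

end Comb

section Key
open Finset

lemma indi_congr {α : Type*} {P Q : α → Prop} (h : ∀ x, P x ↔ Q x) : indi P = indi Q := by
  funext x
  unfold indi
  by_cases hx : P x
  · rw [if_pos hx, if_pos ((h x).1 hx)]
  · rw [if_neg hx, if_neg (fun hq => hx ((h x).2 hq))]

lemma indi_mono_of {α : Type*} [Preorder α] {P : α → Prop}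
    (h : ∀ x y, x ≤ y → P x → P y) : Monotone (indi P) := by
  intro x y hxy
  unfold indi
  split_ifs with h1 h2
  · exact le_rfl
  · exact absurd (h _ _ hxy h1) h2
  · norm_num
  · exact le_rfl

lemma indi_anti_of {α : Type*} [Preorder α] {P : α → Prop}
    (h : ∀ x y, x ≤ y → P y → P x) : Antitone (indi P) := by
  intro x y hxy
  unfold indi
  split_ifs with h1 h2
  · exact le_rfl
  · exact absurd (h _ _ hxy h1) h2
  · norm_num
  · exact le_rfl

lemma Ex_nonneg {ι : Type*} [DecidableEq ι] [Fintype ι] {wt : Bool → ℝ}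
    (h0 : 0 ≤ wt true) (h1 : 0 ≤ wt false)
    {F : (ι → Bool) → ℝ} (h : ∀ f, 0 ≤ F f) : 0 ≤ Ex wt F :=
  Finset.sum_nonneg fun f _ => mul_nonneg (W_nonneg h0 h1 f) (h f)

lemma Ex_sum {ι : Type*} [DecidableEq ι] [Fintype ι] {γ : Type*} [Fintype γ]
    (wt : Bool → ℝ) (H : γ → (ι → Bool) → ℝ) :
    Ex wt (fun f => ∑ c, H c f) = ∑ c, Ex wt (H c) := by
  unfold Ex
  simp_rw [Finset.mul_sum]
  rw [Finset.sum_comm]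

def cellm {n r : ℕ} (c : Cand n r) : Fin r → Fin n × Fin n :=
  fun i => (c.1.1 i, c.1.2 i)

lemma cellm_inj {n r : ℕ} (c : Cand n r) : Function.Injective (cellm c) :=
  fun i j hij => c.2.1 (congrArg Prod.fst hij)

lemma cross_not_mem {n r : ℕ} (c : Cand n r) {i j : Fin r} (hij : i ≠ j) :
    (c.1.1 i, c.1.2 j) ∉ Set.range (cellm c) := by
  rintro ⟨k, hk⟩
  have h1 : k = i := c.2.1 (congrArg Prod.fst hk)
  have h2 : k = j := c.2.2 (congrArg Prod.snd hk)
  exact hij (h1 ▸ h2)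

def cc1 {n r : ℕ} (c : Cand n r) (e : {e : Fin r × Fin r // e.1 < e.2}) :
    {x : Fin n × Fin n // x ∉ Set.range (cellm c)} :=
  ⟨(c.1.1 e.1.1, c.1.2 e.1.2), cross_not_mem c (ne_of_lt e.2)⟩

def cc2 {n r : ℕ} (c : Cand n r) (e : {e : Fin r × Fin r // e.1 < e.2}) :
    {x : Fin n × Fin n // x ∉ Set.range (cellm c)} :=
  ⟨(c.1.1 e.1.2, c.1.2 e.1.1), cross_not_mem c (ne_of_gt e.2)⟩

lemma cc_inj {n r : ℕ} (c : Cand n r) :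
    Function.Injective (fun x : {e : Fin r × Fin r // e.1 < e.2} × Bool =>
      cond x.2 (cc1 c x.1) (cc2 c x.1)) := by
  rintro ⟨e, b⟩ ⟨e', b'⟩ h
  have hval := congrArg Subtype.val h
  cases b <;> cases b' <;> simp only [cond_true, cond_false, cc1, cc2] at hval
  · -- both cc2
    have h1 : e.1.2 = e'.1.2 := c.2.1 (congrArg Prod.fst hval)
    have h2 : e.1.1 = e'.1.1 := c.2.2 (congrArg Prod.snd hval)
    have : e = e' := Subtype.ext (Prod.ext h2 h1)
    rw [this]
  · -- cc2 e = cc1 e'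
    have h1 : e.1.2 = e'.1.1 := c.2.1 (congrArg Prod.fst hval)
    have h2 : e.1.1 = e'.1.2 := c.2.2 (congrArg Prod.snd hval)
    have hA : e.1.1 < e'.1.1 := lt_of_lt_of_eq e.2 h1
    have hB : e'.1.1 < e.1.1 := lt_of_lt_of_eq e'.2 h2.symm
    exact absurd (hA.trans hB) (lt_irrefl _)
  · -- cc1 e = cc2 e'
    have h1 : e.1.1 = e'.1.2 := c.2.1 (congrArg Prod.fst hval)
    have h2 : e.1.2 = e'.1.1 := c.2.2 (congrArg Prod.snd hval)
    have hA : e'.1.1 < e.1.1 := lt_of_lt_of_eq e'.2 h1.symm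
    have hB : e.1.1 < e'.1.1 := lt_of_lt_of_eq e.2 h2
    exact absurd (hA.trans hB) (lt_irrefl _)
  · -- both cc1
    have h1 : e.1.1 = e'.1.1 := c.2.1 (congrArg Prod.fst hval)
    have h2 : e.1.2 = e'.1.2 := c.2.2 (congrArg Prod.snd hval)
    have : e = e' := Subtype.ext (Prod.ext h1 h2)
    rw [this]

lemma grc_mrg {n r : ℕ} (c : Cand n r)
    (v : {x : Fin n × Fin n // x ∉ Set.range (cellm c)} → Bool) :
    grc (mrg (cellm c) v) c = fun e => v (cc1 c e) && v (cc2 c e) := by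
  funext e
  unfold grc
  rw [mrg_not_cell (cellm c) v _ (cross_not_mem c (ne_of_lt e.2)),
    mrg_not_cell (cellm c) v _ (cross_not_mem c (ne_of_gt e.2))]
  rfl

lemma key_ineq (n r a : ℕ) (p : ℝ) (hp0 : 0 ≤ p) (hp1 : p ≤ 1) :
    Ex (wtq p) (indi fun f : (Fin n × Fin n) → Bool =>
        crossFreeMatchNum f < a ∧ r ≤ matchNum f)
      ≤ Ex (wtq (p * p)) (indi fun g : {e : Fin r × Fin r // e.1 < e.2} → Bool =>
          indepNum g < a) := by
  classical
  have h0 : 0 ≤ wtq p true := by simpa using hp0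
  have h1 : 0 ≤ wtq p false := by simp; linarith
  have h20 : 0 ≤ wtq (p*p) true := by simpa using mul_nonneg hp0 hp0
  have h21 : 0 ≤ wtq (p*p) false := by
    simp
    nlinarith
  set QR : ℝ := Ex (wtq (p * p)) (indi fun g : {e : Fin r × Fin r // e.1 < e.2} → Bool =>
      indepNum g < a) with hQR
  have hQR0 : 0 ≤ QR := Ex_nonneg h20 h21 fun g => indi_nonneg _ _
  -- step 1: pointwise domination by the sum over candidates
  have step1 : Ex (wtq p) (indi fun f : (Fin n × Fin n) → Bool =>
        crossFreeMatchNum f < a ∧ r ≤ matchNum f)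
      ≤ ∑ c : Cand n r, Ex (wtq p)
          (indi fun f => Mev f c ∧ indepNum (grc f c) < a) := by
    rw [← Ex_sum (wtq p) (fun c f => indi (fun f => Mev f c ∧ indepNum (grc f c) < a) f)]
    apply Ex_mono h0 h1
    intro f
    by_cases hf : crossFreeMatchNum f < a ∧ r ≤ matchNum f
    · obtain ⟨c0, hc0⟩ := exists_min_good (exists_good hf.2)
      have hc0' : Mev f c0 ∧ indepNum (grc f c0) < a := ⟨hc0, cross_of_good hc0.1 hf.1⟩
      calc indi (fun f : (Fin n × Fin n) → Bool =>
            crossFreeMatchNum f < a ∧ r ≤ matchNum f) f = 1 := by rw [indi, if_pos hf]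
        _ = indi (fun f => Mev f c0 ∧ indepNum (grc f c0) < a) f := by
            rw [indi, if_pos hc0']
        _ ≤ _ := Finset.single_le_sum
            (fun c _ => indi_nonneg (fun f => Mev f c ∧ indepNum (grc f c) < a) f)
            (Finset.mem_univ c0)
    · rw [indi, if_neg hf]
      exact Finset.sum_nonneg fun c _ => indi_nonneg _ _
  -- step 2: per-candidate bound
  have step2 : ∀ c : Cand n r,
      Ex (wtq p) (indi fun f => Mev f c ∧ indepNum (grc f c) < a)
        ≤ Ex (wtq p) (indi fun f => Mev f c) * QR := by
    intro c
    have hfix1 : Ex (wtq p) (indi fun f => Mev f c ∧ indepNum (grc f c) < a)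
        = wtq p true ^ Fintype.card (Fin r) *
          Ex (wtq p) (indi fun v : {x : Fin n × Fin n // x ∉ Set.range (cellm c)} → Bool =>
            (∀ c' < c, ¬ good (mrg (cellm c) v) c') ∧
              indepNum (grc (mrg (cellm c) v) c) < a) := by
      rw [indi_congr (P := fun f => Mev f c ∧ indepNum (grc f c) < a)
        (Q := fun f => (∀ k, f (cellm c k) = true) ∧
          ((∀ c' < c, ¬ good f c') ∧ indepNum (grc f c) < a))
        (fun f => by unfold Mev good cellm; tauto)]
      exact Ex_fix (wtq p) (cellm c) (cellm_inj c) _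
    have hfix2 : Ex (wtq p) (indi fun f => Mev f c)
        = wtq p true ^ Fintype.card (Fin r) *
          Ex (wtq p) (indi fun v : {x : Fin n × Fin n // x ∉ Set.range (cellm c)} → Bool =>
            (∀ c' < c, ¬ good (mrg (cellm c) v) c')) := by
      rw [indi_congr (P := fun f => Mev f c)
        (Q := fun f => (∀ k, f (cellm c k) = true) ∧ (∀ c' < c, ¬ good f c'))
        (fun f => by unfold Mev good cellm; tauto)]
      exact Ex_fix (wtq p) (cellm c) (cellm_inj c) _
    -- split the indicator into the product of two indicators
    have hsplit : (indi fun v : {x : Fin n × Fin n // x ∉ Set.range (cellm c)} → Bool =>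
          (∀ c' < c, ¬ good (mrg (cellm c) v) c') ∧
            indepNum (grc (mrg (cellm c) v) c) < a)
        = fun v => indi (fun v => indepNum (grc (mrg (cellm c) v) c) < a) v *
            indi (fun v => (∀ c' < c, ¬ good (mrg (cellm c) v) c')) v := by
      funext v
      rw [indi_and]
      ring
    have hmonoC : Monotone (indi fun v : {x : Fin n × Fin n // x ∉ Set.range (cellm c)} → Bool =>
        indepNum (grc (mrg (cellm c) v) c) < a) := by
      apply indi_mono_of
      intro v v' hvv hv
      exact lt_of_le_of_lt (indepNum_anti (grc_mono (mrg_mono (cellm c) hvv) c)) hv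
    have hantiE : Antitone (indi fun v : {x : Fin n × Fin n // x ∉ Set.range (cellm c)} → Bool =>
        (∀ c' < c, ¬ good (mrg (cellm c) v) c')) := by
      apply indi_anti_of
      intro v v' hvv hv' c' hc' hg
      exact hv' c' hc' (good_mono (mrg_mono (cellm c) hvv) hg)
    have hharris := harris_anti h0 h1 (wtq_sum p) hmonoC hantiE
    -- identify Ex of the C-indicator with QR
    have hpush : Ex (wtq p) (indi fun v : {x : Fin n × Fin n // x ∉ Set.range (cellm c)} → Bool =>
          indepNum (grc (mrg (cellm c) v) c) < a) = QR := by
      have hrw : (indi fun v : {x : Fin n × Fin n // x ∉ Set.range (cellm c)} → Bool =>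
            indepNum (grc (mrg (cellm c) v) c) < a)
          = fun v => indi (fun g : {e : Fin r × Fin r // e.1 < e.2} → Bool => indepNum g < a)
              (fun e => v (cc1 c e) && v (cc2 c e)) := by
        funext v
        rw [show (fun e => v (cc1 c e) && v (cc2 c e)) = grc (mrg (cellm c) v) c from
          (grc_mrg c v).symm]
        rfl
      rw [hrw, hQR]
      exact Ex_push p (cc1 c) (cc2 c) (cc_inj c) _
    -- assemble
    rw [hfix1, hfix2, hsplit]
    have hEnn : 0 ≤ Ex (wtq p)
        (indi fun v : {x : Fin n × Fin n // x ∉ Set.range (cellm c)} → Bool =>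
          (∀ c' < c, ¬ good (mrg (cellm c) v) c')) :=
      Ex_nonneg h0 h1 fun v => indi_nonneg _ _
    have hpow : (0:ℝ) ≤ wtq p true ^ Fintype.card (Fin r) := pow_nonneg h0 _
    calc wtq p true ^ Fintype.card (Fin r) *
          Ex (wtq p) (fun v => indi (fun v => indepNum (grc (mrg (cellm c) v) c) < a) v *
            indi (fun v => (∀ c' < c, ¬ good (mrg (cellm c) v) c')) v)
        ≤ wtq p true ^ Fintype.card (Fin r) *
          (Ex (wtq p) (indi fun v => indepNum (grc (mrg (cellm c) v) c) < a) *
            Ex (wtq p) (indi fun v => (∀ c' < c, ¬ good (mrg (cellm c) v) c'))) :=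
          mul_le_mul_of_nonneg_left hharris hpow
      _ = (wtq p true ^ Fintype.card (Fin r) *
            Ex (wtq p) (indi fun v => (∀ c' < c, ¬ good (mrg (cellm c) v) c'))) * QR := by
          rw [hpush]; ring
  -- step 3: the M-events are disjoint, so their probabilities sum to at most 1
  have step3 : ∑ c : Cand n r, Ex (wtq p) (indi fun f => Mev f c) ≤ 1 := by
    rw [← Ex_sum (wtq p) (fun c f => indi (fun f => Mev f c) f)]
    have hle : ∀ f : (Fin n × Fin n) → Bool,
        (∑ c : Cand n r, indi (fun f => Mev f c) f) ≤ 1 := by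
      intro f
      have : (∑ c : Cand n r, indi (fun f => Mev f c) f)
          = ((Finset.univ.filter fun c : Cand n r => Mev f c).card : ℝ) := by
        simp only [indi]
        rw [Finset.sum_boole]
      rw [this]
      have hcard : (Finset.univ.filter fun c : Cand n r => Mev f c).card ≤ 1 := by
        apply Finset.card_le_one.mpr
        intro x hx y hy
        simp only [Finset.mem_filter] at hx hy
        exact Mev_unique hx.2 hy.2
      exact_mod_cast hcard
    calc Ex (wtq p) (fun f => ∑ c : Cand n r, indi (fun f => Mev f c) f)
        ≤ Ex (wtq p) (fun _ => (1:ℝ)) := Ex_mono h0 h1 hle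
      _ = 1 := Ex_one (wtq_sum p)
  -- final assembly
  calc Ex (wtq p) (indi fun f : (Fin n × Fin n) → Bool =>
          crossFreeMatchNum f < a ∧ r ≤ matchNum f)
      ≤ ∑ c : Cand n r, Ex (wtq p) (indi fun f => Mev f c ∧ indepNum (grc f c) < a) := step1
    _ ≤ ∑ c : Cand n r, Ex (wtq p) (indi fun f => Mev f c) * QR :=
        Finset.sum_le_sum fun c _ => step2 c
    _ = (∑ c : Cand n r, Ex (wtq p) (indi fun f => Mev f c)) * QR := by
        rw [Finset.sum_mul]
    _ ≤ 1 * QR := mul_le_mul_of_nonneg_right step3 hQR0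
    _ = QR := one_mul QR

end Key

section Bridge
open MeasureTheory

lemma measurableSet_singleton_pi {ι : Type*} [Fintype ι] (f : ι → Bool) :
    MeasurableSet ({f} : Set (ι → Bool)) := by
  have h : ({f} : Set (ι → Bool)) = ⋂ i, (fun g : ι → Bool => g i) ⁻¹' {f i} := by
    ext g
    simp [funext_iff, Set.mem_iInter, eq_comm]
  rw [h]
  exact MeasurableSet.iInter fun i => (measurable_pi_apply i) (measurableSet_singleton _)

lemma bern_singleton (p : ℝ) (hp0 : 0 ≤ p) (hp1 : p ≤ 1) (b : Bool) :
    bern p {b} = ENNReal.ofReal (wtq p b) := by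
  rw [bern, PMF.toMeasure_apply_singleton _ _ (measurableSet_singleton b)]
  have hmin : min (Real.toNNReal p) 1 = Real.toNNReal p :=
    min_eq_left (Real.toNNReal_le_one.mpr hp1)
  rw [PMF.bernoulli_apply]
  cases b
  · show (((1 - min (Real.toNNReal p) 1 : ℝ≥0)) : ℝ≥0∞) = _
    rw [hmin, wtq_false, ENNReal.ofReal, NNReal.sub_def, NNReal.coe_one, Real.coe_toNNReal _ hp0]
  · show ((min (Real.toNNReal p) 1 : ℝ≥0) : ℝ≥0∞) = _
    rw [hmin, wtq_true]
    rfl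

lemma measure_pi_bern {ι : Type*} [DecidableEq ι] [Fintype ι] (p : ℝ)
    (hp0 : 0 ≤ p) (hp1 : p ≤ 1) (S : Set (ι → Bool)) :
    Measure.pi (fun _ : ι => bern p) S
      = ENNReal.ofReal (Ex (wtq p) (indi (· ∈ S))) := by
  classical
  have hpoint : ∀ f : ι → Bool,
      Measure.pi (fun _ : ι => bern p) {f} = ENNReal.ofReal (W (wtq p) f) := by
    intro f
    rw [← Set.univ_pi_singleton f, Measure.pi_pi]
    rw [Finset.prod_congr rfl fun i _ => bern_singleton p hp0 hp1 (f i)]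
    rw [W, ← ENNReal.ofReal_prod_of_nonneg fun i _ => wt_nonneg (by simpa using hp0)
      (by simp; linarith) (f i)]
  have hSet : S = ⋃ f ∈ (Finset.univ.filter (· ∈ S)), ({f} : Set (ι → Bool)) := by
    ext g
    simp
  have hmeas : Measure.pi (fun _ : ι => bern p) S
      = ∑ f ∈ Finset.univ.filter (· ∈ S), ENNReal.ofReal (W (wtq p) f) := by
    conv_lhs => rw [hSet]
    rw [measure_biUnion_finset ?hd ?hm]
    case hd =>
      intro x _ y _ hxy
      simp only [Function.onFun]
      exact Set.disjoint_singleton.mpr hxy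
    case hm =>
      exact fun f _ => measurableSet_singleton_pi f
    exact Finset.sum_congr rfl fun f _ => hpoint f
  rw [hmeas]
  rw [← ENNReal.ofReal_sum_of_nonneg fun f _ =>
    W_nonneg (by simpa using hp0) (by simp; linarith) f]
  congr 1
  rw [Ex, Finset.sum_filter]
  refine Finset.sum_congr rfl fun f _ => ?_
  unfold indi
  split <;> ring

end Bridge
end S19


/-- For all positive integers `n, r, a` and `p ∈ [0,1]`, the probability
that `H_f` has no cross-free matching of size `a` yet has a matching of size at least
`r` is at most the probability that `G_{r,p²}` has no independent set of size `a`. -/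
theorem stmt19 (n r a : ℕ) (hn : 0 < n) (hr : 0 < r) (ha : 0 < a)
    (p : ℝ) (hp0 : 0 ≤ p) (hp1 : p ≤ 1) :
    rbf n p {f | crossFreeMatchNum f < a ∧ r ≤ matchNum f} ≤
      erg r (p ^ 2) {g | indepNum g < a} := by
  have hp20 : (0:ℝ) ≤ p ^ 2 := sq_nonneg p
  have hp21 : p ^ 2 ≤ 1 := pow_le_one₀ hp0 hp1
  rw [show rbf n p = Measure.pi (fun _ : Fin n × Fin n => bern p) from rfl,
    show erg r (p ^ 2) = Measure.pi
      (fun _ : {e : Fin r × Fin r // e.1 < e.2} => bern (p ^ 2)) from rfl]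
  rw [S19.measure_pi_bern p hp0 hp1, S19.measure_pi_bern (p ^ 2) hp20 hp21]
  apply ENNReal.ofReal_le_ofReal
  have hkey := S19.key_ineq n r a p hp0 hp1
  have e1 : (S19.indi (· ∈ {f : (Fin n × Fin n) → Bool |
        crossFreeMatchNum f < a ∧ r ≤ matchNum f}))
      = S19.indi (fun f : (Fin n × Fin n) → Bool =>
        crossFreeMatchNum f < a ∧ r ≤ matchNum f) := rfl
  have e2 : (S19.indi (· ∈ {g : {e : Fin r × Fin r // e.1 < e.2} → Bool | indepNum g < a}))
      = S19.indi (fun g : {e : Fin r × Fin r // e.1 < e.2} → Bool => indepNum g < a) := rfl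
  rw [e1, e2, show p ^ 2 = p * p from sq p]
  exact hkey
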